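/- arXiv:2106.01038 — 5 statements merged into one kernel-verified Lean document; each statement's English description precedes it below -/
import Mathlib

section
/- Let n ≥ 1, let H_I and H_O be finite-dimensional complex Hilbert spaces, and let R be the map defined in the context. Then for any two linear operators A and B on the system space S = (H_I ⊗ H_O)^{⊗n}, one has R(A)·R(B) = R(A·B). -/
open Matrix Kronecker

/-- The rank-one projector onto `|0⟩⊗|1⟩⊗…⊗|n−1⟩` in `(ℂ^n)^{⊗n}`, whose `n`
tensor factors are indexed so that the total space has basis `Fin n → Fin n`. -/
noncomputable def refProj (n : ℕ) : Matrix (Fin n → Fin n) (Fin n → Fin n) ℂ :=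
  Matrix.of fun r r' => if r = (fun k => k) ∧ r' = (fun k => k) then 1 else 0

/-- The unitary `U_g^{SR}` jointly permuting the `n` system factors `H_I ⊗ H_O`
(basis `Fin dI × Fin dO`), the `n` reference input factors `ℂ^n` and the `n`
reference output factors `H_{R_O}` (basis `Fin dR`), according to `g ∈ S_n`. -/
noncomputable def permSR (n dI dO dR : ℕ) (g : Equiv.Perm (Fin n)) :
    Matrix ((Fin n → Fin dI × Fin dO) × (Fin n → Fin n) × (Fin n → Fin dR))
      ((Fin n → Fin dI × Fin dO) × (Fin n → Fin n) × (Fin n → Fin dR)) ℂ :=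
  Matrix.of fun p q => if q = (p.1 ∘ g, p.2.1 ∘ g, p.2.2 ∘ g) then 1 else 0

/-- `R(A) = Σ_{g ∈ S_n} U_g^{SR} (A ⊗ [01…(n−1)]^{R_I} ⊗ 1^{R_O}) (U_g^{SR})†`. -/
noncomputable def Rmap (n dI dO dR : ℕ)
    (A : Matrix (Fin n → Fin dI × Fin dO) (Fin n → Fin dI × Fin dO) ℂ) :
    Matrix ((Fin n → Fin dI × Fin dO) × (Fin n → Fin n) × (Fin n → Fin dR))
      ((Fin n → Fin dI × Fin dO) × (Fin n → Fin n) × (Fin n → Fin dR)) ℂ :=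
  ∑ g : Equiv.Perm (Fin n),
    permSR n dI dO dR g *
      (A ⊗ₖ (refProj n ⊗ₖ (1 : Matrix (Fin n → Fin dR) (Fin n → Fin dR) ℂ))) *
      (permSR n dI dO dR g)ᴴ

lemma comp_cancel {n : ℕ} {α : Type*} (g : Equiv.Perm (Fin n)) (p : Fin n → α) :
    (p ∘ ⇑g) ∘ ⇑g⁻¹ = p := by
  funext x; simp

lemma comp_cancel' {n : ℕ} {α : Type*} (g : Equiv.Perm (Fin n)) (p : Fin n → α) :
    (p ∘ ⇑g⁻¹) ∘ ⇑g = p := by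
  funext x; simp

lemma sigma_eq_iff {n dI dO dR : ℕ} (g : Equiv.Perm (Fin n))
    (p q : (Fin n → Fin dI × Fin dO) × (Fin n → Fin n) × (Fin n → Fin dR)) :
    p = (q.1 ∘ ⇑g, q.2.1 ∘ ⇑g, q.2.2 ∘ ⇑g) ↔ q = (p.1 ∘ ⇑g⁻¹, p.2.1 ∘ ⇑g⁻¹, p.2.2 ∘ ⇑g⁻¹) := by
  constructor
  · rintro rfl
    simp only [Prod.ext_iff]
    exact ⟨(comp_cancel g q.1).symm, (comp_cancel g q.2.1).symm, (comp_cancel g q.2.2).symm⟩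
  · rintro rfl
    simp only [Prod.ext_iff]
    exact ⟨(comp_cancel' g p.1).symm, (comp_cancel' g p.2.1).symm, (comp_cancel' g p.2.2).symm⟩

lemma permSR_conjT (n dI dO dR : ℕ) (g : Equiv.Perm (Fin n)) :
    (permSR n dI dO dR g)ᴴ = permSR n dI dO dR g⁻¹ := by
  ext p q
  simp only [conjTranspose_apply, permSR, of_apply]
  by_cases hc : p = (q.1 ∘ ⇑g, q.2.1 ∘ ⇑g, q.2.2 ∘ ⇑g)
  · rw [if_pos hc, if_pos ((sigma_eq_iff g p q).mp hc)]; simp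
  · rw [if_neg hc, if_neg (fun h => hc ((sigma_eq_iff g p q).mpr h))]; simp

lemma permSR_mul (n dI dO dR : ℕ) (g h : Equiv.Perm (Fin n)) :
    permSR n dI dO dR g * permSR n dI dO dR h = permSR n dI dO dR (g * h) := by
  ext p q
  simp only [mul_apply, permSR, of_apply, ite_mul, one_mul, zero_mul]
  rw [Finset.sum_ite_eq' Finset.univ]
  simp only [Finset.mem_univ, if_true]
  rfl

lemma permSR_one (n dI dO dR : ℕ) :
    permSR n dI dO dR 1 = 1 := by
  ext p q
  simp only [permSR, of_apply, Matrix.one_apply, Equiv.Perm.coe_one, Function.comp_id]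
  by_cases h : p = q
  · subst h; simp
  · rw [if_neg h]; exact if_neg (fun (hh : q = (p.1, p.2.1, p.2.2)) => h (Eq.symm hh))

lemma refProj_mul (n : ℕ) : refProj n * refProj n = refProj n := by
  ext r r'
  simp only [refProj, of_apply, mul_apply]
  rw [Finset.sum_eq_single (fun k : Fin n => k)]
  · split_ifs <;> simp_all
  · intro s _ hs; simp [hs]
  · simp

lemma key (n dI dO dR : ℕ) (k : Equiv.Perm (Fin n))
    (A B : Matrix (Fin n → Fin dI × Fin dO) (Fin n → Fin dI × Fin dO) ℂ) :
    (A ⊗ₖ (refProj n ⊗ₖ (1 : Matrix (Fin n → Fin dR) (Fin n → Fin dR) ℂ))) *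
      permSR n dI dO dR k *
      (B ⊗ₖ (refProj n ⊗ₖ (1 : Matrix (Fin n → Fin dR) (Fin n → Fin dR) ℂ))) =
    if k = 1 then
      ((A * B) ⊗ₖ (refProj n ⊗ₖ (1 : Matrix (Fin n → Fin dR) (Fin n → Fin dR) ℂ)))
    else 0 := by
  by_cases hk : k = 1
  · subst hk
    rw [if_pos rfl, permSR_one, mul_one, ← Matrix.mul_kronecker_mul,
      ← Matrix.mul_kronecker_mul, refProj_mul, Matrix.one_mul]
  · rw [if_neg hk]
    ext p q
    rw [Matrix.mul_apply]
    apply Finset.sum_eq_zero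
    intro s _
    by_cases hs : s.2.1 = fun i => i
    · have h1 : ((A ⊗ₖ (refProj n ⊗ₖ (1 : Matrix (Fin n → Fin dR) (Fin n → Fin dR) ℂ))) *
          permSR n dI dO dR k) p s = 0 := by
        rw [Matrix.mul_apply]
        apply Finset.sum_eq_zero
        intro r _
        by_cases hr : r.2.1 = fun i => i
        · have hne : s ≠ (r.1 ∘ ⇑k, r.2.1 ∘ ⇑k, r.2.2 ∘ ⇑k) := by
            intro hcontr
            apply hk
            have h2 : s.2.1 = r.2.1 ∘ ⇑k := by rw [hcontr]
            rw [hs, hr] at h2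
            exact Equiv.ext fun x => congrFun h2.symm x
          rw [permSR, of_apply, if_neg hne, mul_zero]
        · have : (A ⊗ₖ (refProj n ⊗ₖ (1 : Matrix (Fin n → Fin dR) (Fin n → Fin dR) ℂ))) p r = 0 := by
            simp [Matrix.kroneckerMap_apply, refProj, hr]
          rw [this, zero_mul]
      rw [h1, zero_mul]
    · have : (B ⊗ₖ (refProj n ⊗ₖ (1 : Matrix (Fin n → Fin dR) (Fin n → Fin dR) ℂ))) s q = 0 := by
        simp [Matrix.kroneckerMap_apply, refProj, hs]
      rw [this, mul_zero]

/-- `R` is multiplicative: `R(A)·R(B) = R(A·B)`. -/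
theorem Rmap_mul (n dI dO dR : ℕ) (hn : 1 ≤ n)
    (A B : Matrix (Fin n → Fin dI × Fin dO) (Fin n → Fin dI × Fin dO) ℂ) :
    Rmap n dI dO dR A * Rmap n dI dO dR B = Rmap n dI dO dR (A * B) := by
  simp only [Rmap, permSR_conjT]
  rw [Finset.sum_mul_sum]
  refine Finset.sum_congr rfl fun g _ => ?_
  have step : ∀ h : Equiv.Perm (Fin n),
      permSR n dI dO dR g *
          (A ⊗ₖ (refProj n ⊗ₖ (1 : Matrix (Fin n → Fin dR) (Fin n → Fin dR) ℂ))) *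
          permSR n dI dO dR g⁻¹ *
        (permSR n dI dO dR h *
          (B ⊗ₖ (refProj n ⊗ₖ (1 : Matrix (Fin n → Fin dR) (Fin n → Fin dR) ℂ))) *
          permSR n dI dO dR h⁻¹) =
      if g = h then
        permSR n dI dO dR g *
          ((A * B) ⊗ₖ (refProj n ⊗ₖ (1 : Matrix (Fin n → Fin dR) (Fin n → Fin dR) ℂ))) *
          permSR n dI dO dR h⁻¹
      else 0 := by
    intro h
    have e1 : permSR n dI dO dR g *
          (A ⊗ₖ (refProj n ⊗ₖ (1 : Matrix (Fin n → Fin dR) (Fin n → Fin dR) ℂ))) *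
          permSR n dI dO dR g⁻¹ *
        (permSR n dI dO dR h *
          (B ⊗ₖ (refProj n ⊗ₖ (1 : Matrix (Fin n → Fin dR) (Fin n → Fin dR) ℂ))) *
          permSR n dI dO dR h⁻¹) =
        permSR n dI dO dR g *
          ((A ⊗ₖ (refProj n ⊗ₖ (1 : Matrix (Fin n → Fin dR) (Fin n → Fin dR) ℂ))) *
            permSR n dI dO dR (g⁻¹ * h) *
            (B ⊗ₖ (refProj n ⊗ₖ (1 : Matrix (Fin n → Fin dR) (Fin n → Fin dR) ℂ)))) *
          permSR n dI dO dR h⁻¹ := by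
      rw [← permSR_mul]
      simp only [Matrix.mul_assoc]
    rw [e1, key]
    by_cases hgh : g = h
    · rw [if_pos (by rw [hgh, inv_mul_cancel]), if_pos hgh]
    · rw [if_neg (by simpa [inv_mul_eq_one] using hgh), if_neg hgh, mul_zero, zero_mul]
  calc (∑ h : Equiv.Perm (Fin n), _) = ∑ h : Equiv.Perm (Fin n),
        (if g = h then
          permSR n dI dO dR g *
            ((A * B) ⊗ₖ (refProj n ⊗ₖ (1 : Matrix (Fin n → Fin dR) (Fin n → Fin dR) ℂ))) *
            permSR n dI dO dR h⁻¹
        else 0) := Finset.sum_congr rfl fun h _ => step h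
    _ = _ := by rw [Finset.sum_ite_eq Finset.univ g]; simp
end

section
/- Let W be a valid n-partite process matrix on (H_I ⊗ H_O)^{⊗n}, each party having input space H_I and output space H_O. Extend each party k by a reference input space H_{R_I} = ℂ^n and a reference output space H_{R_O}, and let [01…(n−1)] be the rank-one projector onto |0⟩⊗|1⟩⊗…⊗|n−1⟩ in (ℂ^n)^{⊗n}. Then the operator W ⊗ [01…(n−1)]^{R_I} ⊗ 1^{R_O} (with tensor factors reordered so that party k carries input H_I ⊗ H_{R_I} and output H_O ⊗ H_{R_O}) is a valid n-partite process matrix on the extended spaces. -/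
open Matrix ComplexOrder

/-- Tensor product `M_1 ⊗ … ⊗ M_n` of a family of square matrices, realised on the
product index type. -/
noncomputable def tensorAll {n : ℕ} {γ : Fin n → Type} [∀ k, Fintype (γ k)]
    (M : ∀ k, Matrix (γ k) (γ k) ℂ) : Matrix (∀ k, γ k) (∀ k, γ k) ℂ :=
  Matrix.of fun f f' => ∏ k, M k (f k) (f' k)

/-- Partial trace over the second (output) tensor factor. -/
noncomputable def ptraceOut {α β : Type} [Fintype β]
    (M : Matrix (α × β) (α × β) ℂ) : Matrix α α ℂ :=
  Matrix.of fun a a' => ∑ b, M (a, b) (a', b)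

/-- A valid `n`-partite process matrix on `⨂_k (H_{I_k} ⊗ H_{O_k})`: a positive
semidefinite operator `W` such that `Tr[W·(M_1 ⊗ … ⊗ M_n)] = 1` for every choice of
positive semidefinite `M_k` with `Tr_{O_k}[M_k] = 1_{I_k}` (Choi matrices of CPTP maps). -/
def IsProcessMatrix {n : ℕ} {ι κ : Fin n → Type}
    [∀ k, Fintype (ι k)] [∀ k, Fintype (κ k)] [∀ k, DecidableEq (ι k)]
    (W : Matrix (∀ k, ι k × κ k) (∀ k, ι k × κ k) ℂ) : Prop :=
  W.PosSemidef ∧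
    ∀ M : ∀ k, Matrix (ι k × κ k) (ι k × κ k) ℂ,
      (∀ k, (M k).PosSemidef) → (∀ k, ptraceOut (M k) = 1) →
        (W * tensorAll M).trace = 1

/-- The operator `W ⊗ [01…(n−1)]^{R_I} ⊗ 1^{R_O}`, with the tensor factors reordered so
that party `k` carries input `H_I ⊗ H_{R_I}` (basis `Fin dI × Fin n`, the reference input
being `ℂ^n`) and output `H_O ⊗ H_{R_O}` (basis `Fin dO × Fin dR`).  The factor
`[01…(n−1)]` is the rank-one projector onto `|0⟩⊗|1⟩⊗…⊗|n−1⟩` in `(ℂ^n)^{⊗n}`, and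
`1^{R_O}` the identity on the reference outputs. -/
noncomputable def extendW (n dI dO dR : ℕ)
    (W : Matrix (Fin n → Fin dI × Fin dO) (Fin n → Fin dI × Fin dO) ℂ) :
    Matrix (Fin n → (Fin dI × Fin n) × (Fin dO × Fin dR))
      (Fin n → (Fin dI × Fin n) × (Fin dO × Fin dR)) ℂ :=
  Matrix.of fun f f' =>
    W (fun k => ((f k).1.1, (f k).2.1)) (fun k => ((f' k).1.1, (f' k).2.1)) *
      (if (∀ k, (f k).1.2 = k) ∧ (∀ k, (f' k).1.2 = k) then 1 else 0) *
      (if (fun k => (f k).2.2) = (fun k => (f' k).2.2) then 1 else 0)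

/-! ### Auxiliary material -/

/-- The embedding of the original indices (together with reference-output data) into the
extended indices, with the reference inputs put at positions `j k`. -/
noncomputable def emb (n dI dO dR : ℕ) (a : Fin n → Fin dI × Fin dO)
    (j : Fin n → Fin n) (r : Fin n → Fin dR) :
    Fin n → (Fin dI × Fin n) × (Fin dO × Fin dR) :=
  fun k => (((a k).1, j k), ((a k).2, r k))

noncomputable def embEquiv (n dI dO dR : ℕ) :
    (Fin n → (Fin dI × Fin n) × (Fin dO × Fin dR)) ≃
      ((Fin n → Fin dI × Fin dO) × (Fin n → Fin n) × (Fin n → Fin dR)) where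
  toFun f := (fun k => ((f k).1.1, (f k).2.1), fun k => (f k).1.2, fun k => (f k).2.2)
  invFun p := emb n dI dO dR p.1 p.2.1 p.2.2
  left_inv f := by funext k; simp [emb]
  right_inv p := by obtain ⟨a, j, r⟩ := p; simp [emb]

lemma sum_repr {n dI dO dR : ℕ} (G : (Fin n → (Fin dI × Fin n) × (Fin dO × Fin dR)) → ℂ) :
    ∑ f, G f = ∑ a : Fin n → Fin dI × Fin dO, ∑ j : Fin n → Fin n,
      ∑ r : Fin n → Fin dR, G (emb n dI dO dR a j r) := by
  rw [← Equiv.sum_comp (embEquiv n dI dO dR).symm G]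
  simp only [Fintype.sum_prod_type]
  rfl

lemma sum_repr' {n dI dO dR : ℕ} (G : (Fin n → (Fin dI × Fin n) × (Fin dO × Fin dR)) → ℂ)
    (hG : ∀ f, ¬ (∀ k, (f k).1.2 = k) → G f = 0) :
    ∑ f, G f = ∑ a : Fin n → Fin dI × Fin dO, ∑ r : Fin n → Fin dR,
      G (emb n dI dO dR a (fun k => k) r) := by
  rw [sum_repr]
  refine Finset.sum_congr rfl fun a _ => ?_
  rw [Fintype.sum_eq_single (fun k : Fin n => k)]
  intro j hj
  refine Finset.sum_eq_zero fun r _ => hG _ ?_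
  simp only [emb]
  intro h
  exact hj (funext h)

lemma extendW_posSemidef (n dI dO dR : ℕ)
    (W : Matrix (Fin n → Fin dI × Fin dO) (Fin n → Fin dI × Fin dO) ℂ)
    (hW : W.PosSemidef) : (extendW n dI dO dR W).PosSemidef := by
  obtain ⟨B, hB⟩ : ∃ B : Matrix (Fin n → Fin dI × Fin dO) (Fin n → Fin dI × Fin dO) ℂ,
      W = Bᴴ * B := by
    open scoped MatrixOrder in
    obtain ⟨a, ha⟩ := CStarAlgebra.nonneg_iff_eq_star_mul_self.mp hW.nonneg
    exact ⟨a, ha⟩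
  set C : Matrix ((Fin n → Fin dI × Fin dO) × (Fin n → Fin dR))
      (Fin n → (Fin dI × Fin n) × (Fin dO × Fin dR)) ℂ :=
    Matrix.of fun p f =>
      B p.1 (fun k => ((f k).1.1, (f k).2.1)) *
        ((if (∀ k, (f k).1.2 = k) then 1 else 0) *
          (if (fun k => (f k).2.2) = p.2 then 1 else 0)) with hC
  have : extendW n dI dO dR W = Cᴴ * C := by
    ext f f'
    simp only [extendW, Matrix.mul_apply, conjTranspose_apply, of_apply, hC,
      Fintype.sum_prod_type, star_mul', star_one, star_zero, apply_ite (star : ℂ → ℂ)]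
    by_cases hf : ∀ k, (f k).1.2 = k
    · by_cases hf' : ∀ k, (f' k).1.2 = k
      · by_cases hr : (fun k => (f k).2.2) = (fun k => (f' k).2.2)
        · simp only [hf, hf', hr, implies_true, forall_true_iff, if_true, and_self,
            one_mul, mul_one, hB, Matrix.mul_apply, conjTranspose_apply]
          refine Finset.sum_congr rfl fun a _ => ?_
          rw [Finset.sum_eq_single ((fun k => (f' k).2.2) : Fin n → Fin dR)]
          · simp
          · intro r _ hne
            simp [Ne.symm hne]
          · simp
        · simp only [hf, hf', implies_true, forall_true_iff, if_true, and_self,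
            one_mul, mul_one]
          rw [if_neg hr, mul_zero]
          symm
          refine Finset.sum_eq_zero fun a _ => Finset.sum_eq_zero fun r _ => ?_
          by_cases h1 : (fun k => (f k).2.2) = r
          · have h2 : ¬ (fun k => (f' k).2.2) = r := fun h => hr (h1.trans h.symm)
            simp [h2]
          · simp [h1]
      · simp [hf', and_false]
    · simp [hf, false_and]
  rw [this]
  exact Matrix.posSemidef_conjTranspose_mul_self C

set_option maxHeartbeats 2000000 in
theorem extended_process_is_process (n dI dO dR : ℕ)
    (W : Matrix (Fin n → Fin dI × Fin dO) (Fin n → Fin dI × Fin dO) ℂ)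
    (hW : IsProcessMatrix (ι := fun _ => Fin dI) (κ := fun _ => Fin dO) W) :
    IsProcessMatrix (ι := fun _ => Fin dI × Fin n) (κ := fun _ => Fin dO × Fin dR)
      (extendW n dI dO dR W) := by
  classical
  obtain ⟨hWps, hWtr⟩ := hW
  refine ⟨extendW_posSemidef n dI dO dR W hWps, ?_⟩
  intro M hMps hMtr
  set N : ∀ _ : Fin n, Matrix (Fin dI × Fin dO) (Fin dI × Fin dO) ℂ :=
    fun k => Matrix.of fun p p' =>
      ∑ ρ : Fin dR, M k ((p.1, k), (p.2, ρ)) ((p'.1, k), (p'.2, ρ)) with hN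
  have hNps : ∀ k, (N k).PosSemidef := by
    intro k
    have hsum : N k = ∑ ρ : Fin dR,
        (M k).submatrix (fun p : Fin dI × Fin dO => ((p.1, k), (p.2, ρ)))
          (fun p : Fin dI × Fin dO => ((p.1, k), (p.2, ρ))) := by
      ext p p'
      simp [hN, Matrix.sum_apply]
    rw [hsum]
    refine Finset.sum_induction _ _ (fun A B hA hB => hA.add hB)
      Matrix.PosSemidef.zero fun ρ _ => (hMps k).submatrix _
  have hNtr : ∀ k, ptraceOut (N k) = 1 := by
    intro k
    ext i i'
    have h1 : ptraceOut (N k) i i' = ptraceOut (M k) (i, k) (i', k) := by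
      simp [ptraceOut, hN, Fintype.sum_prod_type]
    rw [h1, hMtr k]
    simp [Matrix.one_apply, Prod.ext_iff]
  calc (extendW n dI dO dR W * tensorAll M).trace
      = ∑ f, ∑ f', extendW n dI dO dR W f f' * tensorAll M f' f := by
        simp [Matrix.trace, Matrix.mul_apply, Matrix.diag]
    _ = ∑ a : Fin n → Fin dI × Fin dO, ∑ r : Fin n → Fin dR, ∑ f',
          extendW n dI dO dR W (emb n dI dO dR a (fun k => k) r) f' *
            tensorAll M f' (emb n dI dO dR a (fun k => k) r) := by
        apply sum_repr'
        intro f hf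
        refine Finset.sum_eq_zero fun f' _ => ?_
        simp [extendW, hf]
    _ = ∑ a : Fin n → Fin dI × Fin dO, ∑ r : Fin n → Fin dR,
          ∑ a' : Fin n → Fin dI × Fin dO, ∑ r' : Fin n → Fin dR,
          extendW n dI dO dR W (emb n dI dO dR a (fun k => k) r)
              (emb n dI dO dR a' (fun k => k) r') *
            tensorAll M (emb n dI dO dR a' (fun k => k) r')
              (emb n dI dO dR a (fun k => k) r) := by
        refine Finset.sum_congr rfl fun a _ => Finset.sum_congr rfl fun r _ => ?_
        apply sum_repr'
        intro f' hf'
        simp [extendW, hf']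
    _ = ∑ a : Fin n → Fin dI × Fin dO, ∑ r : Fin n → Fin dR,
          ∑ a' : Fin n → Fin dI × Fin dO,
          W a a' * tensorAll M (emb n dI dO dR a' (fun k => k) r)
            (emb n dI dO dR a (fun k => k) r) := by
        refine Finset.sum_congr rfl fun a _ => Finset.sum_congr rfl fun r _ =>
          Finset.sum_congr rfl fun a' _ => ?_
        rw [Finset.sum_eq_single r]
        · simp [extendW, emb]
        · intro r' _ hne
          simp [extendW, emb, Ne.symm hne]
        · simp
    _ = ∑ a : Fin n → Fin dI × Fin dO, ∑ a' : Fin n → Fin dI × Fin dO,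
          W a a' * ∑ r : Fin n → Fin dR,
            tensorAll M (emb n dI dO dR a' (fun k => k) r)
              (emb n dI dO dR a (fun k => k) r) := by
        refine Finset.sum_congr rfl fun a _ => ?_
        rw [Finset.sum_comm]
        exact Finset.sum_congr rfl fun a' _ => (Finset.mul_sum _ _ _).symm
    _ = ∑ a : Fin n → Fin dI × Fin dO, ∑ a' : Fin n → Fin dI × Fin dO,
          W a a' * ∏ k, N k (a' k) (a k) := by
        refine Finset.sum_congr rfl fun a _ => Finset.sum_congr rfl fun a' _ => ?_
        congr 1
        calc ∑ r : Fin n → Fin dR,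
              tensorAll M (emb n dI dO dR a' (fun k => k) r)
                (emb n dI dO dR a (fun k => k) r)
            = ∑ r : Fin n → Fin dR, ∏ k,
                M k (((a' k).1, k), ((a' k).2, r k)) (((a k).1, k), ((a k).2, r k)) := rfl
          _ = ∏ k, ∑ ρ : Fin dR,
                M k (((a' k).1, k), ((a' k).2, ρ)) (((a k).1, k), ((a k).2, ρ)) :=
              (Fintype.prod_sum (κ := fun _ : Fin n => Fin dR)
                fun k ρ => M k (((a' k).1, k), ((a' k).2, ρ)) (((a k).1, k), ((a k).2, ρ))).symm
          _ = ∏ k, N k (a' k) (a k) := rfl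
    _ = (W * tensorAll N).trace := by
        simp [Matrix.trace, Matrix.mul_apply, Matrix.diag, tensorAll]
    _ = 1 := hWtr N hNps hNtr
end

section
/- With R the map defined in the context, the operator 1^{SR} − R(1^S) is positive semidefinite, where 1^{SR} is the identity on the combined system–reference space S ⊗ R and 1^S is the identity on the system space S = (H_I ⊗ H_O)^{⊗n}. Consequently, for any positive semidefinite operators M_{i_1},…,M_{i_n} on H_I ⊗ H_O and any real constants N ≥ 1 and d_O > 0, the operator M^inv = R(M_{i_1} ⊗ … ⊗ M_{i_n}) + (1/(N d_O))·(1^{SR} − R(1^S)) is positive semidefinite. -/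
open Matrix Kronecker ComplexOrder

/- ### Auxiliary lemmas -/

open scoped MatrixOrder in
lemma Matrix.posSemidef_iff_eq_transpose_mul_self {a : Type*} [Fintype a] {A : Matrix a a ℂ} :
    A.PosSemidef ↔ ∃ B : Matrix a a ℂ, A = Bᴴ * B := by
  classical
  constructor
  · intro hA
    obtain ⟨B, hB⟩ := CStarAlgebra.nonneg_iff_eq_star_mul_self.mp hA.nonneg
    exact ⟨B, hB⟩
  · rintro ⟨B, rfl⟩
    exact Matrix.posSemidef_conjTranspose_mul_self B

lemma kron_conjTranspose {a b : Type*} [Fintype a] [Fintype b]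
    (A : Matrix a a ℂ) (B : Matrix b b ℂ) : (A ⊗ₖ B)ᴴ = Aᴴ ⊗ₖ Bᴴ := by
  ext ⟨i, j⟩ ⟨i', j'⟩
  simp [conjTranspose_apply, kroneckerMap_apply, star_mul']

lemma kron_posSemidef {a b : Type*} [Fintype a] [Fintype b]
    {A : Matrix a a ℂ} {B : Matrix b b ℂ} (hA : A.PosSemidef) (hB : B.PosSemidef) :
    (A ⊗ₖ B).PosSemidef := by
  obtain ⟨C, rfl⟩ := Matrix.posSemidef_iff_eq_transpose_mul_self.mp hA
  obtain ⟨D, rfl⟩ := Matrix.posSemidef_iff_eq_transpose_mul_self.mp hB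
  rw [Matrix.mul_kronecker_mul, ← kron_conjTranspose]
  exact Matrix.posSemidef_conjTranspose_mul_self _

lemma tensorAll_posSemidef {n : ℕ} {γ : Fin n → Type} [∀ k, Fintype (γ k)]
    [∀ k, DecidableEq (γ k)]
    {M : ∀ k, Matrix (γ k) (γ k) ℂ} (hM : ∀ k, (M k).PosSemidef) :
    (tensorAll M).PosSemidef := by
  have h : ∀ k, ∃ B : Matrix (γ k) (γ k) ℂ, M k = Bᴴ * B :=
    fun k => Matrix.posSemidef_iff_eq_transpose_mul_self.mp (hM k)
  choose B hB using h
  have key : tensorAll M = (tensorAll B)ᴴ * tensorAll B := by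
    ext f f'
    rw [Matrix.mul_apply]
    simp only [tensorAll, of_apply, conjTranspose_apply, hB, Matrix.mul_apply]
    rw [Finset.prod_univ_sum]
    rw [← Fintype.piFinset_univ, Finset.sum_congr rfl]
    intro g _
    simp [star_prod, Finset.prod_mul_distrib]
  rw [key]
  exact Matrix.posSemidef_conjTranspose_mul_self _

lemma refProj_posSemidef (n : ℕ) : (refProj n).PosSemidef := by
  have : refProj n = (refProj n)ᴴ * refProj n := by
    ext r r'
    rw [Matrix.mul_apply]
    rw [Finset.sum_eq_single (fun k : Fin n => k)]
    · by_cases h1 : r = (fun k : Fin n => k) <;> by_cases h2 : r' = (fun k : Fin n => k) <;>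
        simp [refProj, conjTranspose_apply, h1, h2]
    · intro a _ ha
      simp [refProj, conjTranspose_apply, ha]
    · intro h; exact absurd (Finset.mem_univ _) h
  rw [this]
  exact Matrix.posSemidef_conjTranspose_mul_self _

lemma permSR_conj (n dI dO dR : ℕ) (g : Equiv.Perm (Fin n))
    (X : Matrix ((Fin n → Fin dI × Fin dO) × (Fin n → Fin n) × (Fin n → Fin dR))
      ((Fin n → Fin dI × Fin dO) × (Fin n → Fin n) × (Fin n → Fin dR)) ℂ) :
    permSR n dI dO dR g * X * (permSR n dI dO dR g)ᴴ =
      Matrix.of fun p q =>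
        X (p.1 ∘ g, p.2.1 ∘ g, p.2.2 ∘ g) (q.1 ∘ g, q.2.1 ∘ g, q.2.2 ∘ g) := by
  ext p q
  rw [Matrix.mul_apply]
  simp only [Matrix.mul_apply, conjTranspose_apply, permSR, of_apply]
  simp [Finset.sum_ite_eq, Finset.sum_ite_eq']

lemma comp_perm_eq_iff {n : ℕ} {α : Type*} (g : Equiv.Perm (Fin n)) (a b : Fin n → α) :
    a ∘ g = b ∘ g ↔ a = b := by
  constructor
  · intro h; funext k
    have := congrFun h (g.symm k)
    simpa using this
  · rintro rfl; rfl

lemma comp_perm_eq_id_iff {n : ℕ} (g : Equiv.Perm (Fin n)) (r : Fin n → Fin n) :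
    r ∘ g = (fun k => k) ↔ r = ⇑g.symm := by
  constructor
  · intro h; funext k
    have := congrFun h (g.symm k)
    simpa using this
  · rintro rfl; funext k; simp

lemma Rmap_one (n dI dO dR : ℕ) :
    Rmap n dI dO dR 1 = Matrix.diagonal
      (fun p : (Fin n → Fin dI × Fin dO) × (Fin n → Fin n) × (Fin n → Fin dR) =>
        if Function.Bijective p.2.1 then 1 else 0) := by
  ext p q
  rw [Rmap, Matrix.sum_apply]
  simp only [permSR_conj, of_apply, kroneckerMap_apply, refProj, Matrix.one_apply,
    comp_perm_eq_id_iff, comp_perm_eq_iff]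
  by_cases hb : Function.Bijective p.2.1
  · by_cases hpq : p = q
    · subst hpq
      rw [Finset.sum_eq_single (Equiv.ofBijective p.2.1 hb).symm]
      · have hc : ⇑(Equiv.ofBijective p.2.1 hb).symm.symm = p.2.1 := rfl
        rw [Matrix.diagonal_apply_eq, if_pos hb, hc]
        simp
      · intro g _ hg
        have : ¬ (p.2.1 = ⇑g.symm) := by
          intro h
          apply hg
          have : g.symm = Equiv.ofBijective p.2.1 hb := by
            apply DFunLike.coe_injective
            simp [← h, Equiv.ofBijective]
          rw [← this]; simp
        simp [this]
      · intro h; exact absurd (Finset.mem_univ _) h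
    · rw [Matrix.diagonal_apply_ne _ hpq]
      apply Finset.sum_eq_zero
      intro g _
      by_cases h1 : p.2.1 = ⇑g.symm ∧ q.2.1 = ⇑g.symm
      · have h21 : p.2.1 = q.2.1 := by rw [h1.1, h1.2]
        by_cases h2 : p.1 = q.1
        · have h3 : p.2.2 ≠ q.2.2 := by
            intro h3
            exact hpq (Prod.ext h2 (Prod.ext h21 h3))
          simp [h3]
        · simp [h2]
      · simp [h1]
  · have hz : ∀ g : Equiv.Perm (Fin n), ¬ (p.2.1 = ⇑g.symm) :=
      fun g h => hb (h ▸ g.symm.bijective)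
    have hR : Matrix.diagonal
        (fun p : (Fin n → Fin dI × Fin dO) × (Fin n → Fin n) × (Fin n → Fin dR) =>
          if Function.Bijective p.2.1 then (1:ℂ) else 0) p q = 0 := by
      rcases eq_or_ne p q with rfl | hne
      · rw [Matrix.diagonal_apply_eq, if_neg hb]
      · exact Matrix.diagonal_apply_ne _ hne
    rw [hR]
    exact Finset.sum_eq_zero fun g _ => by simp [hz]

lemma smul_posSemidef {m : Type*} [Fintype m] {A : Matrix m m ℂ} (hA : A.PosSemidef)
    {c : ℝ} (hc : 0 ≤ c) : ((c : ℂ) • A).PosSemidef := by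
  constructor
  · have : star ((c : ℝ) : ℂ) = ((c : ℝ) : ℂ) := by
      simp [Complex.star_def, Complex.conj_ofReal]
    rw [Matrix.IsHermitian, Matrix.conjTranspose_smul, this, hA.1.eq]
  · exact (hA.smul (show (0:ℂ) ≤ (c:ℂ) by exact_mod_cast hc)).2

lemma Rmap_posSemidef (n dI dO dR : ℕ)
    {A : Matrix (Fin n → Fin dI × Fin dO) (Fin n → Fin dI × Fin dO) ℂ}
    (hA : A.PosSemidef) : (Rmap n dI dO dR A).PosSemidef := by
  rw [Rmap]
  refine Finset.sum_induction _ _ (fun a b ha hb => ha.add hb) Matrix.PosSemidef.zero ?_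
  intro g _
  exact Matrix.PosSemidef.mul_mul_conjTranspose_same
    (kron_posSemidef hA (kron_posSemidef (refProj_posSemidef n) Matrix.PosSemidef.one)) _

/-- the operator `1^{SR} − R(1^S)` is positive semidefinite, and
consequently for any positive semidefinite local operators `M_{i_1}, …, M_{i_n}` and
real constants `N ≥ 1`, `d_O > 0`, the invariant measurement operator
`M^inv = R(M_{i_1} ⊗ … ⊗ M_{i_n}) + (1/(N d_O))·(1^{SR} − R(1^S))` is positive
semidefinite. -/
theorem invariant_measurement_posSemidef (n dI dO dR : ℕ)
    (M : Fin n → Matrix (Fin dI × Fin dO) (Fin dI × Fin dO) ℂ)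
    (hM : ∀ k, (M k).PosSemidef)
    (N d_O : ℝ) (hN : 1 ≤ N) (hd : 0 < d_O) :
    ((1 : Matrix ((Fin n → Fin dI × Fin dO) × (Fin n → Fin n) × (Fin n → Fin dR))
          ((Fin n → Fin dI × Fin dO) × (Fin n → Fin n) × (Fin n → Fin dR)) ℂ) -
        Rmap n dI dO dR 1).PosSemidef ∧
      (Rmap n dI dO dR (tensorAll M) +
          ((1 / (N * d_O) : ℝ) : ℂ) • ((1 : Matrix _ _ ℂ) - Rmap n dI dO dR 1)).PosSemidef := by
  have h1 : ((1 : Matrix ((Fin n → Fin dI × Fin dO) × (Fin n → Fin n) × (Fin n → Fin dR))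
          ((Fin n → Fin dI × Fin dO) × (Fin n → Fin n) × (Fin n → Fin dR)) ℂ) -
        Rmap n dI dO dR 1).PosSemidef := by
    rw [Rmap_one, ← Matrix.diagonal_one, Matrix.diagonal_sub]
    refine Matrix.PosSemidef.diagonal fun p => ?_
    dsimp only [Pi.one_apply]
    split_ifs <;> norm_num
  refine ⟨h1, Matrix.PosSemidef.add (Rmap_posSemidef n dI dO dR (tensorAll_posSemidef hM)) ?_⟩
  exact smul_posSemidef h1 (by positivity)
end

section
/- Consider bipartite processes where each of the four local spaces H_{A_I}, H_{A_O}, H_{B_I}, H_{B_O} is ℂ², and let U_swap be the unitary on (ℂ² ⊗ ℂ²) ⊗ (ℂ² ⊗ ℂ²) with U_swap(a⊗b⊗c⊗d) = c⊗d⊗a⊗b. Let P_+ (respectively P_−) be the orthogonal projector onto the +1 (respectively −1) eigenspace of U_swap. Then there is no valid bipartite process matrix W satisfying W = P_+ W P_+, and there is no valid bipartite process matrix W satisfying W = P_− W P_−. That is, no valid bipartite qubit process lies entirely in the symmetric or entirely in the antisymmetric representation of S_2. -/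
open Matrix Kronecker ComplexOrder

/-- A valid bipartite process matrix on
`(H_{A_I} ⊗ H_{A_O}) ⊗ (H_{B_I} ⊗ H_{B_O})`: positive semidefinite `W` with
`Tr[W·(M ⊗ N)] = 1` for all positive semidefinite `M`, `N` with `Tr_{A_O}[M] = 1_{A_I}`
and `Tr_{B_O}[N] = 1_{B_I}`. -/
def IsBipartiteProcessMatrix {α β γ δ : Type}
    [Fintype α] [Fintype β] [Fintype γ] [Fintype δ] [DecidableEq α] [DecidableEq γ]
    (W : Matrix ((α × β) × (γ × δ)) ((α × β) × (γ × δ)) ℂ) : Prop :=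
  W.PosSemidef ∧
    ∀ (M : Matrix (α × β) (α × β) ℂ) (N : Matrix (γ × δ) (γ × δ) ℂ),
      M.PosSemidef → N.PosSemidef → ptraceOut M = 1 → ptraceOut N = 1 →
        (W * (M ⊗ₖ N)).trace = 1

/-- The swap unitary on `(ℂ² ⊗ ℂ²) ⊗ (ℂ² ⊗ ℂ²)`, exchanging the two laboratory factors:
`U_swap (a⊗b⊗c⊗d) = c⊗d⊗a⊗b`. -/
noncomputable def Uswap :
    Matrix ((Fin 2 × Fin 2) × (Fin 2 × Fin 2)) ((Fin 2 × Fin 2) × (Fin 2 × Fin 2)) ℂ :=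
  Matrix.of fun p q => if q = (p.2, p.1) then 1 else 0


abbrev Q2 := Fin 2 × Fin 2

-- ptraceOut lemmas
lemma ptraceOut_add {α β : Type} [Fintype β] (M N : Matrix (α × β) (α × β) ℂ) :
    ptraceOut (M + N) = ptraceOut M + ptraceOut N := by
  ext a a'; simp [ptraceOut, Finset.sum_add_distrib]

lemma ptraceOut_smul {α β : Type} [Fintype β] (c : ℂ) (M : Matrix (α × β) (α × β) ℂ) :
    ptraceOut (c • M) = c • ptraceOut M := by
  ext a a'; simp [ptraceOut, Finset.mul_sum]

lemma ptraceOut_one {α β : Type} [Fintype α] [Fintype β] [DecidableEq α] [DecidableEq β] :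
    ptraceOut (1 : Matrix (α × β) (α × β) ℂ) = (Fintype.card β : ℂ) • 1 := by
  ext a a'
  simp only [ptraceOut, of_apply, one_apply, Prod.mk.injEq, Matrix.smul_apply, smul_eq_mul]
  by_cases h : a = a' <;> simp [h]

lemma ptraceOut_kronecker {α β : Type} [Fintype β] (A : Matrix α α ℂ) (B : Matrix β β ℂ) :
    ptraceOut (A ⊗ₖ B) = B.trace • A := by
  ext a a'
  simp only [ptraceOut, of_apply, kroneckerMap_apply, trace, diag, Matrix.smul_apply, smul_eq_mul]
  rw [← Finset.mul_sum]
  ring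

-- valid Choi matrices of the form (1/2)•1 + s•m
lemma choi_valid (m : Matrix Q2 Q2 ℂ) (hm : mᴴ = m) (hm2 : m * m = 1)
    (hmt : ptraceOut m = 0) (s : ℂ) (hs : s = 1/2 ∨ s = -(1/2)) :
    ((1/2 : ℂ) • 1 + s • m).PosSemidef ∧ ptraceOut ((1/2 : ℂ) • 1 + s • m) = 1 := by
  have hs2 : s * s = 1/4 := by rcases hs with h | h <;> rw [h] <;> norm_num
  have hsr : (starRingEnd ℂ) s = s := by rcases hs with h | h <;> rw [h] <;> simp [map_ofNat]
  set M := (1/2 : ℂ) • 1 + s • m with hM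
  have hMherm : Mᴴ = M := by
    simp [hM, conjTranspose_add, conjTranspose_smul, hm, hsr]
  have hMsq : M * M = M := by
    simp only [hM, add_mul, mul_add, smul_mul_smul_comm, one_mul, mul_one, hm2, hs2]
    module
  constructor
  · have : M = Mᴴ * M := by rw [hMherm, hMsq]
    rw [this]; exact posSemidef_conjTranspose_mul_self M
  · rw [hM, ptraceOut_add, ptraceOut_smul, ptraceOut_smul, hmt, ptraceOut_one]
    simp only [Fintype.card_fin, smul_zero, add_zero, smul_smul]
    norm_num

lemma trace_expand (W : Matrix (Q2 × Q2) (Q2 × Q2) ℂ) (m n : Matrix Q2 Q2 ℂ) (s t : ℂ) :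
    (W * ((((1/2 : ℂ) • 1 + s • m) ⊗ₖ ((1/2 : ℂ) • 1 + t • n)))).trace
      = (1/4) * (W * ((1 : Matrix Q2 Q2 ℂ) ⊗ₖ (1 : Matrix Q2 Q2 ℂ))).trace
        + (s/2) * (W * (m ⊗ₖ (1 : Matrix Q2 Q2 ℂ))).trace
        + (t/2) * (W * ((1 : Matrix Q2 Q2 ℂ) ⊗ₖ n)).trace
        + (s*t) * (W * (m ⊗ₖ n)).trace := by
  simp only [add_kronecker, kronecker_add, smul_kronecker, kronecker_smul, mul_add,
    Matrix.mul_smul, trace_add, trace_smul, smul_smul, smul_eq_mul]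
  ring

lemma key_vanish (W : Matrix (Q2 × Q2) (Q2 × Q2) ℂ)
    (hW : IsBipartiteProcessMatrix W) (m n : Matrix Q2 Q2 ℂ)
    (hm : mᴴ = m) (hm2 : m * m = 1) (hmt : ptraceOut m = 0)
    (hn : nᴴ = n) (hn2 : n * n = 1) (hnt : ptraceOut n = 0) :
    (W * (m ⊗ₖ n)).trace = 0 ∧
      (W * ((1 : Matrix Q2 Q2 ℂ) ⊗ₖ (1 : Matrix Q2 Q2 ℂ))).trace = 4 := by
  have h := hW.2
  have inst : ∀ (s t : ℂ), s = 1/2 ∨ s = -(1/2) → t = 1/2 ∨ t = -(1/2) →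
      (1/4) * (W * ((1 : Matrix Q2 Q2 ℂ) ⊗ₖ (1 : Matrix Q2 Q2 ℂ))).trace
        + (s/2) * (W * (m ⊗ₖ (1 : Matrix Q2 Q2 ℂ))).trace
        + (t/2) * (W * ((1 : Matrix Q2 Q2 ℂ) ⊗ₖ n)).trace
        + (s*t) * (W * (m ⊗ₖ n)).trace = 1 := by
    intro s t hs ht
    rw [← trace_expand]
    obtain ⟨hMp, hMt⟩ := choi_valid m hm hm2 hmt s hs
    obtain ⟨hNp, hNt⟩ := choi_valid n hn hn2 hnt t ht
    exact h _ _ hMp hNp hMt hNt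
  have e1 := inst (1/2) (1/2) (Or.inl rfl) (Or.inl rfl)
  have e2 := inst (1/2) (-(1/2)) (Or.inl rfl) (Or.inr rfl)
  have e3 := inst (-(1/2)) (1/2) (Or.inr rfl) (Or.inl rfl)
  have e4 := inst (-(1/2)) (-(1/2)) (Or.inr rfl) (Or.inr rfl)
  constructor
  · linear_combination e1 - e2 - e3 + e4
  · linear_combination e1 + e2 + e3 + e4

lemma psd_trace_nonneg {ι : Type} [Fintype ι] [DecidableEq ι]
    (A : Matrix ι ι ℂ) (h : A.PosSemidef) : 0 ≤ A.trace := by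
  rw [trace]
  apply Finset.sum_nonneg
  intro i _
  exact h.diag_nonneg

lemma psd_trace_zero {ι : Type} [Fintype ι] [DecidableEq ι]
    (A : Matrix ι ι ℂ) (h : A.PosSemidef) (ht : A.trace = 0) : A = 0 := by
  open scoped MatrixOrder in obtain ⟨B, hB⟩ := CStarAlgebra.nonneg_iff_eq_star_mul_self.mp h.nonneg
  rw [star_eq_conjTranspose] at hB; subst hB
  suffices hB : B = 0 by rw [hB]; simp
  have h1 : (Bᴴ * B).trace = ∑ j, ∑ i, ((Complex.normSq (B i j) : ℝ) : ℂ) := by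
    rw [trace]
    congr 1
    ext j
    simp [diag, mul_apply, conjTranspose_apply, Complex.normSq_eq_conj_mul_self]
  rw [h1] at ht
  have h2 : ∑ j, ∑ i, Complex.normSq (B i j) = 0 := by
    have := congrArg Complex.re ht
    simpa [Complex.ofReal_sum] using this
  ext i j
  have h3 : ∀ j' ∈ Finset.univ, (0:ℝ) ≤ ∑ i', Complex.normSq (B i' j') :=
    fun j' _ => Finset.sum_nonneg fun i' _ => Complex.normSq_nonneg _
  have h4 := (Finset.sum_eq_zero_iff_of_nonneg h3).mp h2 j (Finset.mem_univ j)
  have h5 := (Finset.sum_eq_zero_iff_of_nonneg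
    (fun i' _ => Complex.normSq_nonneg (B i' j))).mp h4 i (Finset.mem_univ i)
  simpa using Complex.normSq_eq_zero.mp h5

lemma kron_conjT {a b : Type} [Fintype a] [Fintype b] [DecidableEq a] [DecidableEq b]
    (A : Matrix a a ℂ) (B : Matrix b b ℂ) : (A ⊗ₖ B)ᴴ = Aᴴ ⊗ₖ Bᴴ := by
  ext p q
  simp [conjTranspose_apply, star_mul', mul_comm]

lemma psd_mul_proj_zero {ι : Type} [Fintype ι] [DecidableEq ι]
    (W Q : Matrix ι ι ℂ) (hW : W.PosSemidef) (hQH : Qᴴ = Q) (hQ2 : Q * Q = Q)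
    (ht : (W * Q).trace = 0) : W * Q = 0 := by
  open scoped MatrixOrder in obtain ⟨B, hB⟩ := CStarAlgebra.nonneg_iff_eq_star_mul_self.mp hW.nonneg
  rw [star_eq_conjTranspose] at hB; subst hB
  have h0 : ((B * Q)ᴴ * (B * Q)).trace = 0 := by
    rw [conjTranspose_mul, hQH]
    calc (Q * Bᴴ * (B * Q)).trace = (Q * (Bᴴ * B * Q)).trace := by
          rw [← mul_assoc, ← mul_assoc, mul_assoc Q Bᴴ B]
      _ = ((Bᴴ * B * Q) * Q).trace := trace_mul_comm _ _
      _ = ((Bᴴ * B) * (Q * Q)).trace := by rw [mul_assoc]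
      _ = 0 := by rw [hQ2]; exact ht
  have hBQ : B * Q = 0 := by
    have := psd_trace_zero _ (posSemidef_conjTranspose_mul_self (B * Q)) h0
    exact conjTranspose_mul_self_eq_zero.mp this
  rw [mul_assoc, hBQ, Matrix.mul_zero]

noncomputable def Pauli : Fin 4 → Matrix (Fin 2) (Fin 2) ℂ
  | 0 => !![1, 0; 0, 1]
  | 1 => !![0, 1; 1, 0]
  | 2 => !![0, -Complex.I; Complex.I, 0]
  | 3 => !![1, 0; 0, -1]

lemma pauli_zero : Pauli 0 = 1 := by
  ext i j; fin_cases i <;> fin_cases j <;> simp [Pauli]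

lemma pauli_herm (i : Fin 4) : (Pauli i)ᴴ = Pauli i := by
  fin_cases i <;> ext a b <;> fin_cases a <;> fin_cases b <;>
    simp [Pauli, conjTranspose_apply]

lemma pauli_sq (i : Fin 4) : Pauli i * Pauli i = 1 := by
  fin_cases i <;> ext a b <;> fin_cases a <;> fin_cases b <;>
    simp [Pauli, mul_apply, Fin.sum_univ_two, one_apply, Complex.I_mul_I] <;> ring_nf <;>
    simp [Complex.I_sq]

lemma pauli_complete (a c e g : Fin 2) :
    ∑ i : Fin 4, Pauli i a e * Pauli i c g =
      (2 : ℂ) * ((if a = g then 1 else 0) * (if c = e then 1 else 0)) := by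
  fin_cases a <;> fin_cases c <;> fin_cases e <;> fin_cases g <;>
    simp [Fin.sum_univ_four, Pauli] <;> ring_nf <;> simp [Complex.I_sq] <;> ring

lemma pauli_mul_123 : Pauli 1 * Pauli 2 * Pauli 3 = Complex.I • 1 := by
  ext a b; fin_cases a <;> fin_cases b <;>
    simp [Pauli, mul_apply, Fin.sum_univ_two, one_apply]

lemma pauli_trace_ne (i : Fin 4) (h : i ≠ 0) : (Pauli i).trace = 0 := by
  fin_cases i
  · exact absurd rfl h
  all_goals simp [Pauli, trace, Fin.sum_univ_two]

lemma uswap_herm : Uswapᴴ = Uswap := by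
  ext p q
  simp only [Uswap, conjTranspose_apply, of_apply]
  have : p = (q.2, q.1) ↔ q = (p.2, p.1) := by
    constructor <;> intro h <;> subst h <;> simp
  rw [if_congr this rfl rfl]
  split <;> simp

lemma swap_decomp : (4 : ℂ) • Uswap =
    ∑ i : Fin 4, ∑ j : Fin 4, ((Pauli i ⊗ₖ Pauli j) ⊗ₖ (Pauli i ⊗ₖ Pauli j)) := by
  ext p q
  obtain ⟨⟨a, b⟩, c, d⟩ := p
  obtain ⟨⟨e, f⟩, g, h⟩ := q
  simp only [Matrix.sum_apply, kroneckerMap_apply, Uswap, Matrix.smul_apply, of_apply, smul_eq_mul]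
  have : ∀ i j : Fin 4,
      Pauli i (a, b).1 (e, f).1 * Pauli j (a, b).2 (e, f).2 *
        (Pauli i (c, d).1 (g, h).1 * Pauli j (c, d).2 (g, h).2) =
      (Pauli i a e * Pauli i c g) * (Pauli j b f * Pauli j d h) := by
    intro i j; ring
  rw [Finset.sum_congr rfl fun i _ => Finset.sum_congr rfl fun j _ => this i j]
  rw [← Finset.sum_mul_sum]
  rw [pauli_complete a c e g, pauli_complete b d f h]
  by_cases h1 : a = g <;> by_cases h2 : c = e <;> by_cases h3 : b = h <;> by_cases h4 : d = f <;>
    simp [h1, h2, h3, h4, Prod.ext_iff, eq_comm] <;> ring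

lemma kron_pauli_herm (i j : Fin 4) : (Pauli i ⊗ₖ Pauli j)ᴴ = Pauli i ⊗ₖ Pauli j := by
  rw [kron_conjT, pauli_herm, pauli_herm]

lemma kron_pauli_sq (i j : Fin 4) :
    (Pauli i ⊗ₖ Pauli j) * (Pauli i ⊗ₖ Pauli j) = 1 := by
  rw [← mul_kronecker_mul, pauli_sq, pauli_sq, one_kronecker_one]

lemma kron_pauli_pt (i j : Fin 4) (hj : j ≠ 0) : ptraceOut (Pauli i ⊗ₖ Pauli j) = 0 := by
  rw [ptraceOut_kronecker, pauli_trace_ne j hj, zero_smul]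

noncomputable def TT : Fin 4 → Matrix (Q2 × Q2) (Q2 × Q2) ℂ :=
  fun i => (Pauli i ⊗ₖ Pauli 0) ⊗ₖ (Pauli i ⊗ₖ Pauli 0)

lemma TT_herm (i : Fin 4) : (TT i)ᴴ = TT i := by
  rw [TT, kron_conjT, kron_pauli_herm]

lemma TT_sq (i : Fin 4) : TT i * TT i = 1 := by
  rw [TT, ← mul_kronecker_mul, kron_pauli_sq, one_kronecker_one]

lemma no_sym_aux (W : Matrix ((Q2 × Q2)) ((Q2 × Q2)) ℂ)
    (hW : IsBipartiteProcessMatrix W) (hWS : W * Uswap = W) : False := by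
  have hvan : ∀ i j : Fin 4, j ≠ 0 →
      (W * ((Pauli i ⊗ₖ Pauli j) ⊗ₖ (Pauli i ⊗ₖ Pauli j))).trace = 0 := fun i j hj =>
    (key_vanish W hW _ _ (kron_pauli_herm i j) (kron_pauli_sq i j) (kron_pauli_pt i j hj)
      (kron_pauli_herm i j) (kron_pauli_sq i j) (kron_pauli_pt i j hj)).1
  have h4 : (W * ((1 : Matrix Q2 Q2 ℂ) ⊗ₖ (1 : Matrix Q2 Q2 ℂ))).trace = 4 :=
    (key_vanish W hW _ _ (kron_pauli_herm 0 1) (kron_pauli_sq 0 1) (kron_pauli_pt 0 1 (by decide))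
      (kron_pauli_herm 0 1) (kron_pauli_sq 0 1) (kron_pauli_pt 0 1 (by decide))).2
  have hW4 : W.trace = 4 := by rwa [one_kronecker_one, Matrix.mul_one] at h4
  have hsum : (W * TT 1).trace + (W * TT 2).trace + (W * TT 3).trace = 12 := by
    have h16 : (W * ((4 : ℂ) • Uswap)).trace = 16 := by
      rw [Matrix.mul_smul, trace_smul, hWS, hW4, smul_eq_mul]; norm_num
    rw [swap_decomp] at h16
    simp only [Fin.sum_univ_four, Matrix.mul_add, trace_add] at h16
    rw [hvan 0 1 (by decide), hvan 0 2 (by decide), hvan 0 3 (by decide),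
      hvan 1 1 (by decide), hvan 1 2 (by decide), hvan 1 3 (by decide),
      hvan 2 1 (by decide), hvan 2 2 (by decide), hvan 2 3 (by decide),
      hvan 3 1 (by decide), hvan 3 2 (by decide), hvan 3 3 (by decide)] at h16
    have h00 : (W * ((Pauli 0 ⊗ₖ Pauli 0) ⊗ₖ (Pauli 0 ⊗ₖ Pauli 0))).trace = 4 := by
      rw [pauli_zero, one_kronecker_one, one_kronecker_one, Matrix.mul_one, hW4]
    rw [h00] at h16
    rw [TT, TT, TT]
    linear_combination h16
  -- each Tr[W * TT i] = 4
  have heq : ∀ i : Fin 4, (W * ((1/2 : ℂ) • (1 - TT i))).trace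
      = (1/2) * (4 - (W * TT i).trace) := by
    intro i
    rw [Matrix.mul_smul, trace_smul, Matrix.mul_sub, Matrix.mul_one, trace_sub, hW4,
      smul_eq_mul]
  have hQH : ∀ i : Fin 4, ((1/2 : ℂ) • (1 - TT i))ᴴ = (1/2 : ℂ) • (1 - TT i) := by
    intro i
    rw [conjTranspose_smul, conjTranspose_sub, conjTranspose_one, TT_herm]
    norm_num
  have hQ2 : ∀ i : Fin 4, ((1/2 : ℂ) • (1 - TT i)) * ((1/2 : ℂ) • (1 - TT i))
      = (1/2 : ℂ) • (1 - TT i) := by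
    intro i
    rw [smul_mul_smul_comm, sub_mul, mul_sub, mul_sub, TT_sq, Matrix.one_mul, Matrix.one_mul,
      Matrix.mul_one]
    module
  have hpos : ∀ i : Fin 4, 0 ≤ (W * ((1/2 : ℂ) • (1 - TT i))).trace := by
    intro i
    set Q := (1/2 : ℂ) • (1 - TT i) with hQ
    have h1 : (W * Q).trace = (Qᴴ * W * Q).trace := by
      rw [hQH i]
      calc (W * Q).trace = (W * (Q * Q)).trace := by rw [hQ2 i]
        _ = (W * Q * Q).trace := by rw [mul_assoc]
        _ = (Q * (W * Q)).trace := trace_mul_comm _ _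
        _ = (Q * W * Q).trace := by rw [mul_assoc]
    rw [h1]
    exact psd_trace_nonneg _ (hW.1.conjTranspose_mul_mul_same Q)
  have hzero : ∀ i : Fin 4, i ≠ 0 → W * ((1/2 : ℂ) • (1 - TT i)) = 0 := by
    intro i hi
    apply psd_mul_proj_zero W _ hW.1 (hQH i) (hQ2 i)
    -- trace is zero
    have e1 := heq 1; have e2 := heq 2; have e3 := heq 3
    have p1 := hpos 1; have p2 := hpos 2; have p3 := hpos 3
    rw [e1] at p1; rw [e2] at p2; rw [e3] at p3
    have z1 : (1/2 : ℂ) * (4 - (W * TT 1).trace) = 0 := by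
      have hle : (1/2 : ℂ) * (4 - (W * TT 1).trace) ≤ 0 := by
        have : (1/2 : ℂ) * (4 - (W * TT 1).trace)
            = -((1/2) * (4 - (W * TT 2).trace) + (1/2) * (4 - (W * TT 3).trace)) := by
          linear_combination (-1/2 : ℂ) * hsum
        rw [this]
        exact neg_nonpos.mpr (add_nonneg p2 p3)
      exact le_antisymm hle p1
    have z2 : (1/2 : ℂ) * (4 - (W * TT 2).trace) = 0 := by
      have hle : (1/2 : ℂ) * (4 - (W * TT 2).trace) ≤ 0 := by
        have : (1/2 : ℂ) * (4 - (W * TT 2).trace)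
            = -((1/2) * (4 - (W * TT 1).trace) + (1/2) * (4 - (W * TT 3).trace)) := by
          linear_combination (-1/2 : ℂ) * hsum
        rw [this]
        exact neg_nonpos.mpr (add_nonneg p1 p3)
      exact le_antisymm hle p2
    have z3 : (1/2 : ℂ) * (4 - (W * TT 3).trace) = 0 := by
      have hle : (1/2 : ℂ) * (4 - (W * TT 3).trace) ≤ 0 := by
        have : (1/2 : ℂ) * (4 - (W * TT 3).trace)
            = -((1/2) * (4 - (W * TT 1).trace) + (1/2) * (4 - (W * TT 2).trace)) := by
          linear_combination (-1/2 : ℂ) * hsum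
        rw [this]
        exact neg_nonpos.mpr (add_nonneg p1 p2)
      exact le_antisymm hle p3
    rw [heq i]
    fin_cases i
    · exact absurd rfl hi
    · exact z1
    · exact z2
    · exact z3
  have hfix : ∀ i : Fin 4, i ≠ 0 → W * TT i = W := by
    intro i hi
    have h := hzero i hi
    rw [Matrix.mul_smul, Matrix.mul_sub, Matrix.mul_one] at h
    have h2 : W - W * TT i = 0 := by
      have := smul_eq_zero.mp h
      rcases this with h' | h'
      · norm_num at h'
      · exact h'
    exact (sub_eq_zero.mp h2).symm
  have hT123 : TT 1 * TT 2 * TT 3 = (-1 : ℂ) • 1 := by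
    rw [TT, TT, TT, ← mul_kronecker_mul, ← mul_kronecker_mul, ← mul_kronecker_mul,
      ← mul_kronecker_mul, pauli_mul_123, pauli_zero, Matrix.one_mul, Matrix.one_mul]
    rw [smul_kronecker, kronecker_smul, smul_kronecker, smul_smul,
      one_kronecker_one, one_kronecker_one]
    rw [Complex.I_mul_I]
  have hWneg : W = (-1 : ℂ) • W := by
    calc W = W * (TT 1 * TT 2 * TT 3) := by
          rw [← mul_assoc, ← mul_assoc, hfix 1 (by decide), hfix 2 (by decide),
            hfix 3 (by decide)]
      _ = (-1 : ℂ) • W := by rw [hT123, Matrix.mul_smul, Matrix.mul_one]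
  have htr : W.trace = (-1 : ℂ) * W.trace := by
    conv_lhs => rw [hWneg]
    rw [trace_smul, smul_eq_mul]
  rw [hW4] at htr
  norm_num at htr

noncomputable def PhiV : Q2 → ℂ := fun p => if p.1 = p.2 then 1 else 0

noncomputable def PsiV : Q2 × Q2 → ℂ := fun p => PhiV p.1 * PhiV p.2

noncomputable def MId : Matrix Q2 Q2 ℂ :=
  (Matrix.of fun (_ : Fin 1) (q : Q2) => star (PhiV q))ᴴ *
    (Matrix.of fun (_ : Fin 1) (q : Q2) => star (PhiV q))

lemma MId_apply (p q : Q2) : MId p q = PhiV p * star (PhiV q) := by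
  simp [MId, mul_apply, conjTranspose_apply, Fin.sum_univ_one, mul_comm]

lemma MId_psd : MId.PosSemidef := posSemidef_conjTranspose_mul_self _

lemma MId_pt : ptraceOut MId = 1 := by
  ext a a'
  simp only [ptraceOut, of_apply, MId_apply, PhiV]
  fin_cases a <;> fin_cases a' <;>
    simp [Fin.sum_univ_two, one_apply]

lemma uswap_mulVec_psi : Uswap.mulVec PsiV = PsiV := by
  funext p
  simp only [Uswap, mulVec, dotProduct, of_apply]
  rw [Finset.sum_eq_single (p.2, p.1)]
  · simp [PsiV, mul_comm]
  · intro b _ hb; simp [hb]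
  · intro h; exact absurd (Finset.mem_univ _) h

lemma no_antisym_aux (W : Matrix ((Q2 × Q2)) ((Q2 × Q2)) ℂ)
    (hW : IsBipartiteProcessMatrix W) (hWS : W * Uswap = -W) : False := by
  have hWPsi : W.mulVec PsiV = 0 := by
    have h1 : W.mulVec PsiV = -(W.mulVec PsiV) := by
      conv_lhs => rw [← uswap_mulVec_psi, mulVec_mulVec, hWS, Matrix.neg_mulVec]
    have h2 : W.mulVec PsiV + W.mulVec PsiV = 0 := by
      nth_rewrite 1 [h1]; simp
    funext p
    have := congrFun h2 p
    simp only [Pi.add_apply, Pi.zero_apply] at this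
    have h3 : (2 : ℂ) * W.mulVec PsiV p = 0 := by linear_combination this
    simpa using (mul_eq_zero.mp h3).resolve_left (by norm_num)
  have htr : (W * (MId ⊗ₖ MId)).trace = 0 := by
    rw [trace, ]
    simp only [diag_apply, mul_apply, kroneckerMap_apply, MId_apply]
    calc ∑ p : Q2 × Q2, ∑ q : Q2 × Q2,
        W p q * (PhiV q.1 * star (PhiV p.1) * (PhiV q.2 * star (PhiV p.2)))
        = ∑ p : Q2 × Q2, star (PsiV p) * ∑ q, W p q * PsiV q := by
          apply Finset.sum_congr rfl
          intro p _
          rw [Finset.mul_sum]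
          apply Finset.sum_congr rfl
          intro q _
          simp only [PsiV, star_mul']
          ring
      _ = 0 := by
          apply Finset.sum_eq_zero
          intro p _
          have : W.mulVec PsiV p = 0 := congrFun hWPsi p
          simp only [mulVec, dotProduct] at this
          rw [this, mul_zero]
  have h1 := hW.2 MId MId MId_psd MId_psd MId_pt MId_pt
  rw [htr] at h1
  norm_num at h1

lemma uswap_hermit : Uswapᴴ = Uswap := by
  ext p q
  simp only [Uswap, conjTranspose_apply, of_apply]
  have h : p = (q.2, q.1) ↔ q = (p.2, p.1) := by
    constructor <;> intro h <;> subst h <;> simp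
  rw [if_congr h rfl rfl]
  split <;> simp


/-- no valid bipartite qubit process matrix lies entirely in the
symmetric (`+1`) eigenspace of `U_swap`, and none lies entirely in the antisymmetric
(`−1`) eigenspace: for `P₊` (resp. `P₋`) the orthogonal projector onto the `+1` (resp.
`−1`) eigenspace of `U_swap`, there is no valid bipartite process matrix `W` with
`W = P₊ W P₊`, and none with `W = P₋ W P₋`. -/
theorem no_symmetric_or_antisymmetric_bipartite_qubit_process :
    (∀ Pp : Matrix ((Fin 2 × Fin 2) × (Fin 2 × Fin 2)) ((Fin 2 × Fin 2) × (Fin 2 × Fin 2)) ℂ,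
      Pp.IsHermitian → Pp * Pp = Pp →
      (∀ v : (Fin 2 × Fin 2) × (Fin 2 × Fin 2) → ℂ,
        Pp.mulVec v = v ↔ Uswap.mulVec v = v) →
      ¬ ∃ W, IsBipartiteProcessMatrix W ∧ W = Pp * W * Pp) ∧
    (∀ Pm : Matrix ((Fin 2 × Fin 2) × (Fin 2 × Fin 2)) ((Fin 2 × Fin 2) × (Fin 2 × Fin 2)) ℂ,
      Pm.IsHermitian → Pm * Pm = Pm →
      (∀ v : (Fin 2 × Fin 2) × (Fin 2 × Fin 2) → ℂ,
        Pm.mulVec v = v ↔ Uswap.mulVec v = (-1 : ℂ) • v) →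
      ¬ ∃ W, IsBipartiteProcessMatrix W ∧ W = Pm * W * Pm) := by
  constructor
  · rintro Pp hH hI hE ⟨W, hW, hWP⟩
    have hSP : Uswap * Pp = Pp := by
      have key : ∀ x : (Fin 2 × Fin 2) × (Fin 2 × Fin 2) → ℂ,
          (Uswap * Pp).mulVec x = Pp.mulVec x := by
        intro x
        rw [← mulVec_mulVec]
        exact (hE _).mp (by rw [mulVec_mulVec, hI])
      ext i j
      have := congrFun (key (Pi.single j 1)) i
      simpa [mulVec_single] using this
    have hPS : Pp * Uswap = Pp := by
      have h := congrArg conjTranspose hSP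
      rwa [conjTranspose_mul, uswap_hermit, hH.eq] at h
    have hWS : W * Uswap = W := by
      rw [hWP, mul_assoc, hPS]
    exact no_sym_aux W hW hWS
  · rintro Pm hH hI hE ⟨W, hW, hWP⟩
    have hSP : Uswap * Pm = (-1 : ℂ) • Pm := by
      have key : ∀ x : (Fin 2 × Fin 2) × (Fin 2 × Fin 2) → ℂ,
          (Uswap * Pm).mulVec x = ((-1 : ℂ) • Pm).mulVec x := by
        intro x
        rw [← mulVec_mulVec]
        have h1 := (hE _).mp (by rw [mulVec_mulVec, hI] :
          Pm.mulVec (Pm.mulVec x) = Pm.mulVec x)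
        rw [h1]
        funext i
        simp [Matrix.smul_mulVec, Matrix.neg_mulVec]
      ext i j
      have := congrFun (key (Pi.single j 1)) i
      simpa [mulVec_single] using this
    have hPS : Pm * Uswap = (-1 : ℂ) • Pm := by
      have h := congrArg conjTranspose hSP
      rw [conjTranspose_mul, uswap_hermit, hH.eq, conjTranspose_smul, hH.eq] at h
      simpa using h
    have hWS : W * Uswap = -W := by
      rw [hWP, mul_assoc, hPS, Matrix.mul_smul]
      module
    exact no_antisym_aux W hW hWS
end

section
/- Let n ≥ 2 and consider n-partite processes where every local input and output space is ℂ², so the total space is ((ℂ² ⊗ ℂ²))^{⊗n} with the k-th factor ℂ² ⊗ ℂ² comprising the input and output of party k. For g ∈ S_n, let U_g be the unitary permuting the n factors ℂ² ⊗ ℂ² according to g, let P_sym be the orthogonal projector onto {v : U_g v = v for all g ∈ S_n}, and let P_asym be the orthogonal projector onto {v : U_g v = sgn(g) v for all g ∈ S_n}. Then there is no valid n-partite process matrix W with W = P_sym W P_sym, and there is no valid n-partite process matrix W with W = P_asym W P_asym. That is, no valid n-partite qubit process lies entirely in the symmetric or entirely in the antisymmetric representation of S_n. -/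
open Matrix ComplexOrder

/-- The unitary `U_g` on `((ℂ² ⊗ ℂ²))^{⊗n}` permuting the `n` laboratory factors
`ℂ² ⊗ ℂ²` (the `k`-th factor comprising the input and output of party `k`) according to
`g ∈ S_n`. -/
noncomputable def permMat (n : ℕ) (g : Equiv.Perm (Fin n)) :
    Matrix (Fin n → Fin 2 × Fin 2) (Fin n → Fin 2 × Fin 2) ℂ :=
  Matrix.of fun p q => if q = p ∘ g then 1 else 0

/-- The character by which (anti)symmetric vectors transform: `1` in the symmetric case
(`ε = false`) and `sgn(g)` in the antisymmetric case (`ε = true`). -/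
noncomputable def sgnChar {n : ℕ} (ε : Bool) (g : Equiv.Perm (Fin n)) : ℂ :=
  if ε then ((Equiv.Perm.sign g : ℤ) : ℂ) else 1

/-! ### Auxiliary definitions for the proof -/

namespace NoSymAsymProcess

/-- The Choi matrix `½ · 1` (of the completely depolarising channel). -/
noncomputable def half2 : Matrix (Fin 2 × Fin 2) (Fin 2 × Fin 2) ℂ :=
  Matrix.diagonal fun _ => (2⁻¹ : ℂ)

/-- The Choi matrix of the channel that discards the input and prepares `|o⟩⟨o|`. -/
noncomputable def prep (o : Fin 2) : Matrix (Fin 2 × Fin 2) (Fin 2 × Fin 2) ℂ :=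
  Matrix.diagonal fun a => if a.2 = o then (1 : ℂ) else 0

/-- The fourth roots of unity. -/
noncomputable def ec : Fin 4 → ℂ := ![1, Complex.I, -1, -Complex.I]

/-- The vector `e_u + e·e_v`. -/
noncomputable def wvec (u v : Fin 2 × Fin 2) (e : ℂ) : Fin 2 × Fin 2 → ℂ :=
  fun p => if p = u then 1 else if p = v then e else 0

/-- Rank-one outer product `|w⟩⟨w|`. -/
noncomputable def outer {ι : Type} [Fintype ι] (w : ι → ℂ) : Matrix ι ι ℂ :=
  Matrix.of fun p q => w p * star (w q)

/-- Diagonal filler making `choiM` a Choi matrix. -/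
noncomputable def dqf (u v : Fin 2 × Fin 2) : Fin 2 × Fin 2 → ℂ :=
  fun p => 2⁻¹ - (if p.1 = u.1 then 4⁻¹ else 0) - (if p.1 = v.1 then 4⁻¹ else 0)

/-- The Choi matrices `½|w_e⟩⟨w_e| + diag` used to polarise the matrix unit `E_{u v}`. -/
noncomputable def choiM (u v : Fin 2 × Fin 2) (e : ℂ) :
    Matrix (Fin 2 × Fin 2) (Fin 2 × Fin 2) ℂ :=
  (2⁻¹ : ℂ) • outer (wvec u v e) + Matrix.diagonal (dqf u v)

lemma ec_mul_star (m : Fin 4) : ec m * star (ec m) = 1 := by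
  fin_cases m <;> simp [ec]

lemma outer_psd {ι : Type} [Fintype ι] (w : ι → ℂ) : (outer w).PosSemidef := by
  rw [posSemidef_iff_dotProduct_mulVec]
  constructor
  · ext p q
    simp only [outer, conjTranspose_apply, Matrix.of_apply, star_mul', star_star]
    ring
  · intro x
    have h : dotProduct (star x) (outer w *ᵥ x)
        = star (∑ q, star (w q) * x q) * (∑ q, star (w q) * x q) := by
      simp only [outer, dotProduct, mulVec, Matrix.of_apply, Pi.star_apply, star_sum, star_mul',
        star_star, Finset.sum_mul, Finset.mul_sum]
      rw [Finset.sum_comm]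
      apply Finset.sum_congr rfl
      intro q _
      apply Finset.sum_congr rfl
      intro p _
      ring
    rw [h]
    exact star_mul_self_nonneg _

lemma smul_psd {ι : Type} [Fintype ι] {M : Matrix ι ι ℂ} (hM : M.PosSemidef) {c : ℂ}
    (hc : 0 ≤ c) : (c • M).PosSemidef := by
  rw [posSemidef_iff_dotProduct_mulVec]
  constructor
  · have hs : star c = c := IsSelfAdjoint.of_nonneg hc
    ext p q
    simp [conjTranspose_apply, hM.1.apply, hs]
  · intro x
    rw [smul_mulVec, dotProduct_smul, smul_eq_mul]
    exact mul_nonneg hc (hM.dotProduct_mulVec_nonneg x)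

lemma dqf_nonneg (u v : Fin 2 × Fin 2) (p : Fin 2 × Fin 2) : 0 ≤ dqf u v p := by
  unfold dqf
  split_ifs <;> rw [Complex.nonneg_iff] <;> norm_num

lemma choiM_psd (u v : Fin 2 × Fin 2) (e : ℂ) : (choiM u v e).PosSemidef :=
  (smul_psd (outer_psd _) (by rw [Complex.nonneg_iff]; norm_num)).add
    (Matrix.PosSemidef.diagonal (dqf_nonneg u v))

lemma choiM_ptrace (u v : Fin 2 × Fin 2) (e : ℂ) (huv : u.2 ≠ v.2)
    (he : e * star e = 1) : ptraceOut (choiM u v e) = 1 := by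
  have he' : star e * e = 1 := by rw [mul_comm]; exact he
  obtain ⟨u1, u2⟩ := u
  obtain ⟨v1, v2⟩ := v
  ext a a'
  fin_cases u2 <;> fin_cases v2 <;> simp_all <;>
    fin_cases u1 <;> fin_cases v1 <;> fin_cases a <;> fin_cases a' <;>
      simp [choiM, outer, wvec, dqf, ptraceOut, Matrix.diagonal_apply, Matrix.one_apply,
        Fin.sum_univ_two, Prod.ext_iff, he, he'] <;> ring

lemma choiM_decomp (u v : Fin 2 × Fin 2) (huv : u ≠ v) :
    (Matrix.of fun a b => if a = u ∧ b = v then (1 : ℂ) else 0)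
      = ∑ m : Fin 4, (ec m / 2) • choiM u v (ec m) := by
  have hsum : (1 : ℂ) + Complex.I + -1 + -Complex.I = 0 := by ring
  ext a b
  simp only [Matrix.sum_apply, Matrix.smul_apply, Matrix.add_apply, Matrix.smul_apply,
    Matrix.of_apply, choiM, outer, Matrix.diagonal_apply, smul_eq_mul, Fin.sum_univ_four, ec,
    wvec]
  by_cases hau : a = u <;> by_cases hbv : b = v <;> by_cases hav : a = v <;>
    by_cases hbu : b = u <;> simp_all <;> (try split_ifs) <;>
      first
        | ring1
        | (ring_nf; simp only [Complex.I_sq]; norm_num)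
        | (simp [Complex.ext_iff]; norm_num)

lemma half2_psd : half2.PosSemidef :=
  Matrix.PosSemidef.diagonal fun _ => by
    show (0:ℂ) ≤ 2⁻¹
    rw [Complex.nonneg_iff]; norm_num

lemma half2_ptrace : ptraceOut half2 = 1 := by
  ext a a'
  by_cases h : a = a' <;>
    simp [ptraceOut, half2, Matrix.diagonal_apply, Matrix.one_apply, Fin.sum_univ_two,
      Prod.ext_iff, h] <;> norm_num

lemma prep_psd (o : Fin 2) : (prep o).PosSemidef :=
  Matrix.PosSemidef.diagonal fun a => by
    show (0:ℂ) ≤ if a.2 = o then 1 else 0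
    split_ifs <;> rw [Complex.nonneg_iff] <;> norm_num

lemma prep_ptrace (o : Fin 2) : ptraceOut (prep o) = 1 := by
  ext a a'
  by_cases h : a = a' <;>
    fin_cases o <;>
      simp [ptraceOut, prep, Matrix.diagonal_apply, Matrix.one_apply, Fin.sum_univ_two,
        Prod.ext_iff, h]

end NoSymAsymProcess

open NoSymAsymProcess in
/-- for `n ≥ 2`, no valid `n`-partite qubit process matrix lies entirely
in the symmetric representation of `S_n`, and none lies entirely in the antisymmetric
representation: if `P` is the orthogonal projector onto
`{v : U_g v = v ∀ g ∈ S_n}` (the case `ε = false`) or onto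
`{v : U_g v = sgn(g) v ∀ g ∈ S_n}` (the case `ε = true`), then there is no valid
`n`-partite process matrix `W` with `W = P W P`. -/
theorem no_symmetric_or_antisymmetric_qubit_process (n : ℕ) (hn : 2 ≤ n) (ε : Bool)
    (P : Matrix (Fin n → Fin 2 × Fin 2) (Fin n → Fin 2 × Fin 2) ℂ)
    (hPherm : P.IsHermitian) (hPidem : P * P = P)
    (hPrange : ∀ v : (Fin n → Fin 2 × Fin 2) → ℂ,
      P.mulVec v = v ↔
        ∀ g : Equiv.Perm (Fin n), (permMat n g).mulVec v = sgnChar ε g • v) :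
    ¬ ∃ W : Matrix (Fin n → Fin 2 × Fin 2) (Fin n → Fin 2 × Fin 2) ℂ,
        IsProcessMatrix (ι := fun _ => Fin 2) (κ := fun _ => Fin 2) W ∧
          W = P * W * P := by
  rintro ⟨W, ⟨hWpsd, hTr⟩, hsupp⟩
  classical
  have h0n : 0 < n := by omega
  have h1n : 1 < n := by omega
  set i0 : Fin n := ⟨0, h0n⟩ with hi0
  set i1 : Fin n := ⟨1, h1n⟩ with hi1
  have h01 : i0 ≠ i1 := by simp [hi0, hi1, Fin.ext_iff]
  set τ : Equiv.Perm (Fin n) := Equiv.swap i0 i1 with hτ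
  -- facts about the character
  have hsgn_star : ∀ g : Equiv.Perm (Fin n), star (sgnChar ε g) = sgnChar ε g := by
    intro g
    cases ε
    · simp [sgnChar]
    · rcases Int.units_eq_one_or (Equiv.Perm.sign g) with h | h <;> simp [sgnChar, h]
  have hsgn_ne : ∀ g : Equiv.Perm (Fin n), sgnChar ε g ≠ 0 := by
    intro g
    cases ε
    · simp [sgnChar]
    · rcases Int.units_eq_one_or (Equiv.Perm.sign g) with h | h <;> simp [sgnChar, h]
  -- the column relation U_g P = χ(g) P, entrywise
  have hPcol : ∀ (g : Equiv.Perm (Fin n)) (p j), P (p ∘ ⇑g) j = sgnChar ε g * P p j := by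
    intro g p j
    have hcol : P.mulVec (fun r => P r j) = fun r => P r j := by
      funext x
      have h := congrFun (congrFun hPidem x) j
      simp only [Matrix.mul_apply] at h
      simpa [Matrix.mulVec, dotProduct] using h
    have h := congrFun ((hPrange _).mp hcol g) p
    simp only [Matrix.mulVec, dotProduct, permMat, Matrix.of_apply, Pi.smul_apply,
      smul_eq_mul, ite_mul, one_mul, zero_mul, Finset.sum_ite_eq', Finset.mem_univ,
      if_true] at h
    exact h
  have hPapp : ∀ a b, P a b = star (P b a) := by
    intro a b
    conv_lhs => rw [← hPherm]
    simp [Matrix.conjTranspose_apply]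
  -- the row relation P U_g = χ(g) P, entrywise
  have hProw : ∀ (g : Equiv.Perm (Fin n)) (p q), P p (q ∘ ⇑g) = sgnChar ε g * P p q := by
    intro g p q
    calc P p (q ∘ ⇑g) = star (P (q ∘ ⇑g) p) := hPapp _ _
      _ = star (sgnChar ε g * P q p) := by rw [hPcol g q p]
      _ = sgnChar ε g * star (P q p) := by rw [star_mul', hsgn_star]
      _ = sgnChar ε g * P p q := by rw [← hPapp]
  -- the key symmetry of W : W(p, q ∘ g) = χ(g) W(p, q)
  have hWrow : ∀ (g : Equiv.Perm (Fin n)) (p q), W p (q ∘ ⇑g) = sgnChar ε g * W p q := by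
    intro g p q
    have e : ∀ x, W p x = ∑ s, (P * W) p s * P s x := by
      intro x
      conv_lhs => rw [hsupp]
      rw [Matrix.mul_apply]
    rw [e (q ∘ ⇑g), e q, Finset.mul_sum]
    refine Finset.sum_congr rfl fun s _ => ?_
    rw [hProw]
    ring
  -- diagonal entries of W are nonnegative
  have hdiag : ∀ p, 0 ≤ W p p := by
    intro p
    have h := hWpsd.dotProduct_mulVec_nonneg (Pi.single p 1)
    simpa [Matrix.mulVec_single, dotProduct, Pi.single_apply, ite_mul, mul_ite] using h
  -- the finite set of "other" parties
  have hi1R : i1 ∈ Finset.univ.erase i0 := Finset.mem_erase.mpr ⟨Ne.symm h01, Finset.mem_univ _⟩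
  have hmemR : ∀ k, k ∈ (Finset.univ.erase i0).erase i1 ↔ k ≠ i1 ∧ k ≠ i0 := by
    intro k
    simp [Finset.mem_erase]
  have hc0 : ((2:ℂ)⁻¹) ^ ((Finset.univ.erase i0).erase i1).card ≠ 0 :=
    pow_ne_zero _ (by norm_num)
  -- the bilinear functional obtained from feeding Chois A, B at slots i0, i1
  set F : Matrix (Fin 2 × Fin 2) (Fin 2 × Fin 2) ℂ → Matrix (Fin 2 × Fin 2) (Fin 2 × Fin 2) ℂ
      → ℂ := fun A B => ∑ p, ∑ q, W p q * (A (q i0) (p i0) *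
        (B (q i1) (p i1) * ∏ k ∈ (Finset.univ.erase i0).erase i1, half2 (q k) (p k)))
    with hFdef
  -- process condition in terms of F
  have hkey : ∀ A B : Matrix (Fin 2 × Fin 2) (Fin 2 × Fin 2) ℂ, A.PosSemidef →
      ptraceOut A = 1 → B.PosSemidef → ptraceOut B = 1 → F A B = 1 := by
    intro A B hA hA1 hB hB1
    have hMpsd : ∀ k, ((fun k => if k = i0 then A else if k = i1 then B else half2) k).PosSemidef := by
      intro k
      dsimp only
      split_ifs
      · exact hA
      · exact hB
      · exact half2_psd
    have hMtr : ∀ k, ptraceOut ((fun k => if k = i0 then A else if k = i1 then B else half2) k) = 1 := by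
      intro k
      dsimp only
      split_ifs
      · exact hA1
      · exact hB1
      · exact half2_ptrace
    have hM := hTr _ hMpsd hMtr
    have hprod : ∀ q p : Fin n → Fin 2 × Fin 2,
        (∏ k, (if k = i0 then A else if k = i1 then B else half2) (q k) (p k))
          = A (q i0) (p i0) * (B (q i1) (p i1)
              * ∏ k ∈ (Finset.univ.erase i0).erase i1, half2 (q k) (p k)) := by
      intro q p
      have h3 : (∏ k ∈ (Finset.univ.erase i0).erase i1,
          (if k = i0 then A else if k = i1 then B else half2) (q k) (p k))
          = ∏ k ∈ (Finset.univ.erase i0).erase i1, half2 (q k) (p k) :=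
        Finset.prod_congr rfl fun k hk => by
          rw [hmemR] at hk
          simp [hk.1, hk.2]
      rw [← Finset.mul_prod_erase Finset.univ _ (Finset.mem_univ i0),
        ← Finset.mul_prod_erase _ _ hi1R, h3]
      simp [Ne.symm h01]
    unfold Matrix.trace Matrix.diag at hM
    simp only [Matrix.mul_apply, tensorAll, Matrix.of_apply] at hM
    simp only [hprod] at hM
    rw [hFdef]
    exact hM
  -- bilinearity of F
  have hFsum_left : ∀ (f : Fin 4 → Matrix (Fin 2 × Fin 2) (Fin 2 × Fin 2) ℂ) B,
      F (∑ m, f m) B = ∑ m, F (f m) B := by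
    intro f B
    simp only [hFdef, Matrix.sum_apply, Finset.sum_mul, Finset.mul_sum]
    exact (Finset.sum_congr rfl fun p _ => Finset.sum_comm).trans Finset.sum_comm
  have hFsmul_left : ∀ (a : ℂ) A B, F (a • A) B = a * F A B := by
    intro a A B
    simp only [hFdef, Matrix.smul_apply, smul_eq_mul]
    rw [Finset.mul_sum]
    refine Finset.sum_congr rfl fun p _ => ?_
    rw [Finset.mul_sum]
    refine Finset.sum_congr rfl fun q _ => ?_
    ring
  have hFsum_right : ∀ A (f : Fin 4 → Matrix (Fin 2 × Fin 2) (Fin 2 × Fin 2) ℂ),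
      F A (∑ m, f m) = ∑ m, F A (f m) := by
    intro A f
    simp only [hFdef, Matrix.sum_apply, Finset.sum_mul, Finset.mul_sum]
    exact (Finset.sum_congr rfl fun p _ => Finset.sum_comm).trans Finset.sum_comm
  have hFsmul_right : ∀ (a : ℂ) A B, F A (a • B) = a * F A B := by
    intro a A B
    simp only [hFdef, Matrix.smul_apply, smul_eq_mul]
    rw [Finset.mul_sum]
    refine Finset.sum_congr rfl fun p _ => ?_
    rw [Finset.mul_sum]
    refine Finset.sum_congr rfl fun q _ => ?_
    ring
  -- diagonal entries at configurations whose outputs differ at parties i0, i1 vanish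
  have hkill : ∀ p : Fin n → Fin 2 × Fin 2, (p i0).2 ≠ (p i1).2 → W p p = 0 := by
    intro p hp
    set u : Fin 2 × Fin 2 := p i1 with hu
    set v : Fin 2 × Fin 2 := p i0 with hv
    have huv2 : u.2 ≠ v.2 := by
      simp only [hu, hv]
      simp only [hu, hv] at hp
      exact Ne.symm hp
    have huv : u ≠ v := fun h => huv2 (by rw [h])
    -- Step 1 : F E_{uv} E_{vu} = 0
    have hFE : F (Matrix.of fun a b => if a = u ∧ b = v then (1:ℂ) else 0)
        (Matrix.of fun a b => if a = v ∧ b = u then (1:ℂ) else 0) = 0 := by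
      rw [choiM_decomp u v huv, choiM_decomp v u (Ne.symm huv)]
      rw [hFsum_left]
      have hterm0 : ∀ m : Fin 4, F ((ec m / 2) • choiM u v (ec m))
          (∑ s : Fin 4, (ec s / 2) • choiM v u (ec s)) = 0 := by
        intro m
        rw [hFsmul_left, hFsum_right]
        have h2 : ∀ s : Fin 4, F (choiM u v (ec m)) ((ec s / 2) • choiM v u (ec s))
            = ec s / 2 := by
          intro s
          rw [hFsmul_right, hkey _ _ (choiM_psd u v (ec m))
            (choiM_ptrace u v (ec m) huv2 (ec_mul_star m)) (choiM_psd v u (ec s))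
            (choiM_ptrace v u (ec s) (Ne.symm huv2) (ec_mul_star s)), mul_one]
        simp only [h2]
        rw [show (∑ s : Fin 4, ec s / 2) = 0 by simp [ec, Fin.sum_univ_four]; ring]
        ring
      simp only [hterm0]
      simp
    -- Step 2 : pointwise identification of the summand
    have hpoint : ∀ p' q : Fin n → Fin 2 × Fin 2,
        (Matrix.of fun a b => if a = u ∧ b = v then (1:ℂ) else 0) (q i0) (p' i0) *
          ((Matrix.of fun a b => if a = v ∧ b = u then (1:ℂ) else 0) (q i1) (p' i1) *
            ∏ k ∈ (Finset.univ.erase i0).erase i1, half2 (q k) (p' k))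
        = if q = p' ∘ ⇑τ ∧ p' i0 = v ∧ p' i1 = u
            then ((2:ℂ)⁻¹) ^ ((Finset.univ.erase i0).erase i1).card else 0 := by
      intro p' q
      simp only [Matrix.of_apply]
      by_cases h1 : q i0 = u ∧ p' i0 = v
      · by_cases h2 : q i1 = v ∧ p' i1 = u
        · by_cases h3 : ∀ k ∈ (Finset.univ.erase i0).erase i1, q k = p' k
          · have hq : q = p' ∘ ⇑τ := by
              funext k
              rcases eq_or_ne k i0 with rfl | hk0
              · simp only [Function.comp_apply, hτ, Equiv.swap_apply_left]
                rw [h1.1, h2.2]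
              rcases eq_or_ne k i1 with rfl | hk1
              · simp only [Function.comp_apply, hτ, Equiv.swap_apply_right]
                rw [h2.1, h1.2]
              · have hkk := h3 k ((hmemR k).mpr ⟨hk1, hk0⟩)
                simp only [Function.comp_apply, hτ, Equiv.swap_apply_of_ne_of_ne hk0 hk1]
                exact hkk
            rw [if_pos h1, if_pos h2,
              if_pos (show q = p' ∘ ⇑τ ∧ p' i0 = v ∧ p' i1 = u from ⟨hq, h1.2, h2.2⟩)]
            have hpr : ∏ k ∈ (Finset.univ.erase i0).erase i1, half2 (q k) (p' k)
                = ∏ _k ∈ (Finset.univ.erase i0).erase i1, (2:ℂ)⁻¹ :=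
              Finset.prod_congr rfl fun k hk => by
                simp [half2, Matrix.diagonal_apply, h3 k hk]
            rw [hpr, Finset.prod_const]
            ring
          · push_neg at h3
            obtain ⟨k, hkR, hkq⟩ := h3
            have hz : half2 (q k) (p' k) = 0 := by
              simp [half2, Matrix.diagonal_apply, hkq]
            have hng : ¬(q = p' ∘ ⇑τ ∧ p' i0 = v ∧ p' i1 = u) := by
              rintro ⟨hq, -, -⟩
              apply hkq
              rw [hq]
              simp only [Function.comp_apply, hτ,
                Equiv.swap_apply_of_ne_of_ne ((hmemR k).mp hkR).2 ((hmemR k).mp hkR).1]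
            rw [Finset.prod_eq_zero hkR hz, if_neg hng]
            ring
        · have hng : ¬(q = p' ∘ ⇑τ ∧ p' i0 = v ∧ p' i1 = u) := by
            rintro ⟨hq, hv', hu'⟩
            refine h2 ⟨?_, hu'⟩
            rw [hq]
            simp only [Function.comp_apply, hτ, Equiv.swap_apply_right]
            exact hv'
          rw [if_neg h2, if_neg hng]
          ring
      · have hng : ¬(q = p' ∘ ⇑τ ∧ p' i0 = v ∧ p' i1 = u) := by
          rintro ⟨hq, hv', hu'⟩
          refine h1 ⟨?_, hv'⟩
          rw [hq]
          simp only [Function.comp_apply, hτ, Equiv.swap_apply_left]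
          exact hu'
        rw [if_neg h1, if_neg hng]
        ring
    -- Step 3 : compute F E_{uv} E_{vu} as a sum of diagonal entries
    have hFE2 : F (Matrix.of fun a b => if a = u ∧ b = v then (1:ℂ) else 0)
        (Matrix.of fun a b => if a = v ∧ b = u then (1:ℂ) else 0)
        = (sgnChar ε τ * ((2:ℂ)⁻¹) ^ ((Finset.univ.erase i0).erase i1).card) *
            ∑ p', (if p' i0 = v ∧ p' i1 = u then W p' p' else 0) := by
      simp only [hFdef]
      rw [Finset.mul_sum]
      refine Finset.sum_congr rfl fun p' _ => ?_
      rw [show (∑ q, W p' q * ((Matrix.of fun a b => if a = u ∧ b = v then (1:ℂ) else 0) (q i0) (p' i0) *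
          ((Matrix.of fun a b => if a = v ∧ b = u then (1:ℂ) else 0) (q i1) (p' i1) *
            ∏ k ∈ (Finset.univ.erase i0).erase i1, half2 (q k) (p' k))))
          = ∑ q, (if q = p' ∘ ⇑τ then (if p' i0 = v ∧ p' i1 = u
              then W p' q * ((2:ℂ)⁻¹) ^ ((Finset.univ.erase i0).erase i1).card else 0) else 0)
          from Finset.sum_congr rfl fun q _ => by
            rw [hpoint p' q]
            by_cases hq : q = p' ∘ ⇑τ <;> by_cases hc : p' i0 = v ∧ p' i1 = u <;>
              simp [hq, hc]]
      rw [Finset.sum_ite_eq' Finset.univ (p' ∘ ⇑τ)]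
      simp only [Finset.mem_univ, if_true]
      rw [hWrow τ p' p']
      by_cases hc : p' i0 = v ∧ p' i1 = u <;> simp [hc] <;> ring
    -- Step 4 : conclude
    have hsum0 : ∑ p', (if p' i0 = v ∧ p' i1 = u then W p' p' else 0) = 0 := by
      have h := hFE2.symm.trans hFE
      rcases mul_eq_zero.mp h with h' | h'
      · exact absurd h' (mul_ne_zero (hsgn_ne τ) hc0)
      · exact h'
    have hterm : ∀ p' ∈ Finset.univ,
        (0:ℂ) ≤ (if p' i0 = v ∧ p' i1 = u then W p' p' else 0) := by
      intro p' _
      split_ifs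
      · exact hdiag p'
      · exact le_refl 0
    have hzz := (Finset.sum_eq_zero_iff_of_nonneg hterm).mp hsum0 p (Finset.mem_univ p)
    simpa [← hu, ← hv] using hzz
  -- Final contradiction using the preparation Chois
  have hfin : F (prep 0) (prep 1) = 1 :=
    hkey _ _ (prep_psd 0) (prep_ptrace 0) (prep_psd 1) (prep_ptrace 1)
  have hzero : F (prep 0) (prep 1) = 0 := by
    simp only [hFdef]
    refine Finset.sum_eq_zero fun p' _ => ?_
    refine Finset.sum_eq_zero fun q _ => ?_
    by_cases hqp : q = p'
    · rw [hqp]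
      by_cases h0 : (p' i0).2 = 0
      · by_cases h1 : (p' i1).2 = 1
        · have hWq : W p' p' = 0 := hkill p' (by rw [h0, h1]; exact (by decide : (0:Fin 2) ≠ 1))
          rw [hWq]
          ring
        · have hz : prep 1 (p' i1) (p' i1) = 0 := by
            simp [prep, Matrix.diagonal_apply, h1]
          rw [hz]
          ring
      · have hz : prep 0 (p' i0) (p' i0) = 0 := by
          simp [prep, Matrix.diagonal_apply, h0]
        rw [hz]
        ring
    · -- q ≠ p' : some factor vanishes
      by_cases hq0 : q i0 = p' i0
      · by_cases hq1 : q i1 = p' i1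
        · have h3 : ¬ ∀ k ∈ (Finset.univ.erase i0).erase i1, q k = p' k := by
            intro h3
            apply hqp
            funext k
            rcases eq_or_ne k i0 with rfl | hk0
            · exact hq0
            rcases eq_or_ne k i1 with rfl | hk1
            · exact hq1
            · exact h3 k ((hmemR k).mpr ⟨hk1, hk0⟩)
          push_neg at h3
          obtain ⟨k, hkR, hkq⟩ := h3
          have hz : half2 (q k) (p' k) = 0 := by
            simp [half2, Matrix.diagonal_apply, hkq]
          rw [Finset.prod_eq_zero hkR hz]
          ring
        · have hz : prep 1 (q i1) (p' i1) = 0 := by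
            simp [prep, Matrix.diagonal_apply, hq1]
          rw [hz]
          ring
      · have hz : prep 0 (q i0) (p' i0) = 0 := by
          simp [prep, Matrix.diagonal_apply, hq0]
        rw [hz]
        ring
  rw [hfin] at hzero
  exact one_ne_zero hzero
end
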